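/- arXiv:2508.07823 — 2 statements merged into one kernel-verified Lean document; each statement's English description precedes it below -/
import Mathlib

section
/- There exists a constant C > 0 such that for all integers n ≥ 2, B ≥ 1 and 1 ≤ n' ≤ n the following holds. Let Z_1, ..., Z_{n'} be i.i.d. uniform on {1,...,B}, and for a bin b and time t let L_b(t) = |{r ≤ t : Z_r = b}|. Then with probability at least 1 − C/n^{11}, for every integer i with B·(log n)^4 ≤ i ≤ n' and every bin b ∈ {1,...,B}, the load satisfies |L_b(i) − i/B| ≤ (1/20)·d(i/B). -/
open MeasureTheory
open scoped ENNReal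

/-- The distribution of `n'` balls thrown independently and uniformly into `B` bins. -/
noncomputable def uniformBins (n' B : ℕ) : Measure (Fin n' → Fin B) :=
  Measure.pi fun _ => ((B : ℝ≥0∞)⁻¹ • Measure.count)

/-- `load z b t`: the number of balls among the first `t` that land in bin `b`. -/
def load {n' B : ℕ} (z : Fin n' → Fin B) (b : Fin B) (t : ℕ) : ℕ :=
  (Finset.univ.filter fun r : Fin n' => (r : ℕ) < t ∧ z r = b).card

/-- `dFn y = y - ⌈y - (1/2)·y^(2/3)⌉`, so that `⌈y - (1/2)·y^(2/3)⌉ = y - dFn y`. -/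
noncomputable def dFn (y : ℝ) : ℝ := y - (⌈y - (1/2) * y ^ ((2:ℝ)/3)⌉ : ℤ)

/-- The bound `m' = ⌈(n'/B) - (1/2)·(n'/B)^(2/3)⌉`. -/
noncomputable def mBound (n' B : ℕ) : ℤ :=
  ⌈((n' : ℝ)/B) - (1/2) * (((n' : ℝ)/B) ^ ((2:ℝ)/3))⌉

/-- The first time at which some bin's load reaches `m`. -/
noncomputable def hitTime {n' B : ℕ} (z : Fin n' → Fin B) (m : ℤ) : ℕ :=
  sInf {t : ℕ | ∃ b : Fin B, m ≤ (load z b t : ℤ)}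

open Finset

instance unifFin (B : ℕ) : IsFiniteMeasure ((B : ℝ≥0∞)⁻¹ • (Measure.count : Measure (Fin B))) := by
  constructor
  rw [Measure.smul_apply, smul_eq_mul, Measure.count_univ]
  rcases Nat.eq_zero_or_pos B with h | h
  · simp [h]
  · rw [ENat.card_eq_coe_fintype_card, ENat.toENNReal_coe, Fintype.card_fin, ENNReal.inv_mul_cancel (by exact_mod_cast h.ne') (by simp)]
    exact ENNReal.one_lt_top

lemma uniformBins_singleton (n' B : ℕ) (z : Fin n' → Fin B) :
    uniformBins n' B {z} = ((B : ℝ≥0∞) ^ n')⁻¹ := by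
  rw [uniformBins, ← Set.univ_pi_singleton, Measure.pi_pi]
  simp [Measure.count_singleton, ENNReal.inv_pow]

lemma uniformBins_coe_finset (n' B : ℕ) (F : Finset (Fin n' → Fin B)) :
    uniformBins n' B ↑F = (F.card : ℝ≥0∞) / (B : ℝ≥0∞) ^ n' := by
  have h1 : (↑F : Set (Fin n' → Fin B)) = ⋃ z ∈ F, {z} := by
    ext z; simp
  rw [h1, measure_biUnion_finset]
  · simp [uniformBins_singleton, ENNReal.div_eq_inv_mul, mul_comm]
  · intro x _ y _ hxy
    simp [Function.onFun, Set.disjoint_singleton, hxy]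
  · intro b _
    exact measurableSet_singleton b

lemma card_filter_lt (n' i : ℕ) (h : i ≤ n') :
    (Finset.univ.filter fun r : Fin n' => (r : ℕ) < i).card = i := by
  have : (Finset.univ.filter fun r : Fin n' => (r:ℕ) < i) = Finset.map (Fin.castLEEmb h) Finset.univ := by
    ext r
    simp only [mem_filter, mem_univ, true_and, mem_map]
    constructor
    · intro hr
      exact ⟨⟨r, hr⟩, rfl⟩
    · rintro ⟨s, rfl⟩
      exact s.isLt
  rw [this, Finset.card_map, Finset.card_univ, Fintype.card_fin]

lemma load_eq_sum {n' B : ℕ} (z : Fin n' → Fin B) (b : Fin B) (i : ℕ) :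
    (load z b i : ℝ) = ∑ r : Fin n', (if (r : ℕ) < i ∧ z r = b then (1:ℝ) else 0) := by
  rw [load, Finset.card_filter]
  push_cast
  rfl

lemma sum_exp_load {n' B : ℕ} (i : ℕ) (hi : i ≤ n') (b : Fin B) (lam : ℝ) :
    ∑ z : Fin n' → Fin B, Real.exp (lam * (load z b i : ℝ))
      = (Real.exp lam + ((B : ℝ) - 1)) ^ i * (B : ℝ) ^ (n' - i) := by
  classical
  have step1 : ∀ z : Fin n' → Fin B, Real.exp (lam * (load z b i : ℝ))
      = ∏ r : Fin n', Real.exp (lam * if (r : ℕ) < i ∧ z r = b then (1:ℝ) else 0) := by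
    intro z
    rw [load_eq_sum, Finset.mul_sum, Real.exp_sum]
  have step2 : ∑ z : Fin n' → Fin B, ∏ r : Fin n',
        Real.exp (lam * if (r : ℕ) < i ∧ z r = b then (1:ℝ) else 0)
      = ∏ r : Fin n', ∑ v : Fin B, Real.exp (lam * if (r : ℕ) < i ∧ v = b then (1:ℝ) else 0) := by
    rw [Finset.prod_univ_sum (fun _ : Fin n' => (univ : Finset (Fin B)))
      (fun (r : Fin n') (v : Fin B) => Real.exp (lam * if (r : ℕ) < i ∧ v = b then (1:ℝ) else 0)),
      Fintype.piFinset_univ]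
  have inner : ∀ r : Fin n', ∑ v : Fin B, Real.exp (lam * if (r : ℕ) < i ∧ v = b then (1:ℝ) else 0)
      = if (r : ℕ) < i then Real.exp lam + ((B:ℝ) - 1) else (B : ℝ) := by
    intro r
    by_cases hr : (r : ℕ) < i
    · simp only [hr, true_and, if_pos]
      have : ∀ v : Fin B, Real.exp (lam * if v = b then (1:ℝ) else 0)
          = (if v = b then Real.exp lam - 1 else 0) + 1 := by
        intro v; split <;> simp
      rw [Finset.sum_congr rfl (fun v _ => this v), Finset.sum_add_distrib,
        Finset.sum_ite_eq' univ b, Finset.sum_const, Finset.card_univ, Fintype.card_fin]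
      simp; ring
    · simp [hr]
  calc ∑ z : Fin n' → Fin B, Real.exp (lam * (load z b i : ℝ))
      = ∑ z : Fin n' → Fin B, ∏ r : Fin n',
          Real.exp (lam * if (r : ℕ) < i ∧ z r = b then (1:ℝ) else 0) :=
        Finset.sum_congr rfl fun z _ => step1 z
    _ = ∏ r : Fin n', ∑ v : Fin B, Real.exp (lam * if (r : ℕ) < i ∧ v = b then (1:ℝ) else 0) := step2
    _ = ∏ r : Fin n', (if (r : ℕ) < i then Real.exp lam + ((B:ℝ) - 1) else (B : ℝ)) :=
        Finset.prod_congr rfl fun r _ => inner r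
    _ = (Real.exp lam + ((B : ℝ) - 1)) ^ i * (B : ℝ) ^ (n' - i) := by
        rw [Finset.prod_ite (fun _ => Real.exp lam + ((B:ℝ)-1)) (fun _ => (B:ℝ)),
          Finset.prod_const, Finset.prod_const, card_filter_lt n' i hi]
        congr 2
        have h0 := Finset.card_filter_add_card_filter_not
          (s := (univ : Finset (Fin n'))) (fun r : Fin n' => (r:ℕ) < i)
        rw [card_filter_lt n' i hi, Finset.card_univ, Fintype.card_fin] at h0
        omega

lemma aux_ratio {B : ℕ} (hB : 1 ≤ B) {i n' : ℕ} (hi : i ≤ n') (c : ℝ) (hc : 0 ≤ c) :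
    (c + ((B : ℝ) - 1)) ^ i * (B : ℝ) ^ (n' - i)
      ≤ Real.exp (((i : ℝ) / B) * (c - 1)) * (B : ℝ) ^ n' := by
  have hB0 : (0:ℝ) < B := by exact_mod_cast hB
  have h2 : (0:ℝ) ≤ 1 + (c - 1) / B := by
    have h3 : (-1:ℝ) ≤ (c - 1) / B := by
      rw [le_div_iff₀ hB0]
      nlinarith [hc, hB0, (by exact_mod_cast hB : (1:ℝ) ≤ B)]
    linarith
  have h1 : c + ((B:ℝ) - 1) = (1 + (c - 1) / B) * B := by field_simp; ring
  have h4 : (1 + (c - 1) / B) ^ i ≤ Real.exp (((i:ℝ)/B) * (c - 1)) := by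
    calc (1 + (c - 1) / B) ^ i ≤ (Real.exp ((c - 1)/B)) ^ i := by
          apply pow_le_pow_left₀ h2
          linarith [Real.add_one_le_exp ((c - 1)/B)]
      _ = Real.exp (((i:ℝ)/B) * (c - 1)) := by
          rw [← Real.exp_nat_mul]; congr 1; field_simp
  calc (c + ((B : ℝ) - 1)) ^ i * (B : ℝ) ^ (n' - i)
      = (1 + (c - 1) / B) ^ i * ((B:ℝ) ^ i * (B:ℝ) ^ (n' - i)) := by
        rw [h1, mul_pow]; ring
    _ = (1 + (c - 1) / B) ^ i * (B:ℝ) ^ n' := by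
        rw [← pow_add]; congr 2; omega
    _ ≤ Real.exp (((i:ℝ)/B) * (c - 1)) * (B : ℝ) ^ n' := by
        apply mul_le_mul_of_nonneg_right h4 (by positivity)

lemma card_upper {n' B : ℕ} (hB : 1 ≤ B) {i : ℕ} (hi : i ≤ n') (b : Fin B)
    (lam a : ℝ) (hlam : 0 ≤ lam) :
    (((Finset.univ.filter fun z : Fin n' → Fin B => a ≤ (load z b i : ℝ)).card : ℝ))
      ≤ Real.exp (-(lam * a) + ((i : ℝ)/B) * (Real.exp lam - 1)) * (B : ℝ) ^ n' := by
  classical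
  set F := Finset.univ.filter fun z : Fin n' → Fin B => a ≤ (load z b i : ℝ) with hF
  have key : ((F.card : ℝ))
      ≤ ∑ z : Fin n' → Fin B, Real.exp (lam * (load z b i : ℝ)) * Real.exp (-(lam * a)) := by
    calc (F.card : ℝ) = ∑ _z ∈ F, (1:ℝ) := by simp
      _ ≤ ∑ z ∈ F, Real.exp (lam * (load z b i : ℝ)) * Real.exp (-(lam * a)) := by
          apply Finset.sum_le_sum
          intro z hz
          rw [← Real.exp_add]
          apply Real.one_le_exp
          have hz' : a ≤ (load z b i : ℝ) := by
            simpa [hF] using (Finset.mem_filter.mp hz).2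
          nlinarith
      _ ≤ ∑ z : Fin n' → Fin B, Real.exp (lam * (load z b i : ℝ)) * Real.exp (-(lam * a)) := by
          apply Finset.sum_le_sum_of_subset_of_nonneg (Finset.filter_subset _ _)
          intro z _ _
          positivity
  rw [← Finset.sum_mul, sum_exp_load i hi b lam] at key
  refine key.trans ?_
  have := aux_ratio hB hi (Real.exp lam) (Real.exp_nonneg lam)
  calc (Real.exp lam + ((B:ℝ) - 1)) ^ i * (B : ℝ) ^ (n' - i) * Real.exp (-(lam * a))
      ≤ Real.exp (((i:ℝ)/B) * (Real.exp lam - 1)) * (B : ℝ) ^ n' * Real.exp (-(lam * a)) := by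
        apply mul_le_mul_of_nonneg_right this (Real.exp_nonneg _)
    _ = Real.exp (-(lam * a) + ((i : ℝ)/B) * (Real.exp lam - 1)) * (B : ℝ) ^ n' := by
        rw [mul_right_comm, ← Real.exp_add, add_comm]

lemma card_lower {n' B : ℕ} (hB : 1 ≤ B) {i : ℕ} (hi : i ≤ n') (b : Fin B)
    (lam a : ℝ) (hlam : 0 ≤ lam) :
    (((Finset.univ.filter fun z : Fin n' → Fin B => (load z b i : ℝ) ≤ a).card : ℝ))
      ≤ Real.exp (lam * a + ((i : ℝ)/B) * (Real.exp (-lam) - 1)) * (B : ℝ) ^ n' := by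
  classical
  set F := Finset.univ.filter fun z : Fin n' → Fin B => (load z b i : ℝ) ≤ a with hF
  have key : ((F.card : ℝ))
      ≤ ∑ z : Fin n' → Fin B, Real.exp ((-lam) * (load z b i : ℝ)) * Real.exp (lam * a) := by
    calc (F.card : ℝ) = ∑ _z ∈ F, (1:ℝ) := by simp
      _ ≤ ∑ z ∈ F, Real.exp ((-lam) * (load z b i : ℝ)) * Real.exp (lam * a) := by
          apply Finset.sum_le_sum
          intro z hz
          rw [← Real.exp_add]
          apply Real.one_le_exp
          have hz' : (load z b i : ℝ) ≤ a := by
            simpa [hF] using (Finset.mem_filter.mp hz).2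
          nlinarith
      _ ≤ ∑ z : Fin n' → Fin B, Real.exp ((-lam) * (load z b i : ℝ)) * Real.exp (lam * a) := by
          apply Finset.sum_le_sum_of_subset_of_nonneg (Finset.filter_subset _ _)
          intro z _ _
          positivity
  rw [← Finset.sum_mul, sum_exp_load i hi b (-lam)] at key
  refine key.trans ?_
  have := aux_ratio hB hi (Real.exp (-lam)) (Real.exp_nonneg _)
  calc (Real.exp (-lam) + ((B:ℝ) - 1)) ^ i * (B : ℝ) ^ (n' - i) * Real.exp (lam * a)
      ≤ Real.exp (((i:ℝ)/B) * (Real.exp (-lam) - 1)) * (B : ℝ) ^ n' * Real.exp (lam * a) := by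
        apply mul_le_mul_of_nonneg_right this (Real.exp_nonneg _)
    _ = Real.exp (lam * a + ((i : ℝ)/B) * (Real.exp (-lam) - 1)) * (B : ℝ) ^ n' := by
        rw [mul_right_comm, ← Real.exp_add, add_comm]

lemma exp_quad {x : ℝ} (h : |x| ≤ 1) : Real.exp x ≤ 1 + x + x ^ 2 := by
  have hb := Real.exp_bound h (by norm_num : 0 < 2)
  have hs : ∑ m ∈ Finset.range 2, x ^ m / (m.factorial : ℝ) = 1 + x := by
    simp [Finset.sum_range_succ]
  rw [hs] at hb
  have h1 := (abs_le.mp hb).2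
  have h2 : |x| ^ 2 = x ^ 2 := sq_abs x
  have h3 : ((2:ℕ).succ : ℝ) / ((2:ℕ).factorial * (2:ℕ) : ℝ) = 3 / 4 := by norm_num
  nlinarith [sq_nonneg x]

lemma card_dev {n' B : ℕ} (hB : 1 ≤ B) {i : ℕ} (hi : i ≤ n') (b : Fin B)
    (t : ℝ) (ht : 0 < t) (hy : 0 < (i:ℝ)/B) (ht2 : t ≤ 2 * ((i:ℝ)/B)) :
    ((Finset.univ.filter fun z : Fin n' → Fin B =>
        t < |(load z b i : ℝ) - (i:ℝ)/B|).card : ℝ)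
      ≤ 2 * Real.exp (-(t ^ 2 / (4 * ((i:ℝ)/B)))) * (B:ℝ) ^ n' := by
  classical
  set y := (i:ℝ)/B with hydef
  set lam := t / (2 * y) with hlamdef
  have hlam0 : 0 ≤ lam := by positivity
  have hlam1 : lam ≤ 1 := by
    rw [hlamdef, div_le_one (by positivity)]
    linarith
  have hexp1 : Real.exp lam ≤ 1 + lam + lam ^ 2 :=
    exp_quad (by rw [abs_of_nonneg hlam0]; exact hlam1)
  have hexp2 : Real.exp (-lam) ≤ 1 - lam + lam ^ 2 := by
    have := exp_quad (x := -lam) (by rw [abs_neg, abs_of_nonneg hlam0]; exact hlam1)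
    nlinarith
  have hkey : -(lam * t) + y * lam ^ 2 = -(t ^ 2 / (4 * y)) := by
    rw [hlamdef]; field_simp; ring
  have hsub : (Finset.univ.filter fun z : Fin n' → Fin B =>
        t < |(load z b i : ℝ) - y|)
      ⊆ (Finset.univ.filter fun z : Fin n' → Fin B => y + t ≤ (load z b i : ℝ))
        ∪ (Finset.univ.filter fun z : Fin n' → Fin B => (load z b i : ℝ) ≤ y - t) := by
    intro z hz
    have hz' : t < |(load z b i : ℝ) - y| := (Finset.mem_filter.mp hz).2
    rw [Finset.mem_union, Finset.mem_filter, Finset.mem_filter]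
    rcases lt_abs.mp hz' with h | h
    · exact Or.inl ⟨Finset.mem_univ z, by linarith⟩
    · exact Or.inr ⟨Finset.mem_univ z, by linarith⟩
  have hcard := Finset.card_le_card hsub
  have hcard2 := Finset.card_union_le
    (Finset.univ.filter fun z : Fin n' → Fin B => y + t ≤ (load z b i : ℝ))
    (Finset.univ.filter fun z : Fin n' → Fin B => (load z b i : ℝ) ≤ y - t)
  have hup := card_upper hB hi b lam (y + t) hlam0
  have hlo := card_lower hB hi b lam (y - t) hlam0
  have hBn : (0:ℝ) ≤ (B:ℝ) ^ n' := by positivity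
  have hup2 : Real.exp (-(lam * (y + t)) + y * (Real.exp lam - 1))
      ≤ Real.exp (-(t ^ 2 / (4 * y))) := by
    rw [← hkey]
    apply Real.exp_le_exp.mpr
    have : y * (Real.exp lam - 1) ≤ y * (lam + lam ^ 2) :=
      mul_le_mul_of_nonneg_left (by linarith) (le_of_lt hy)
    nlinarith
  have hlo2 : Real.exp (lam * (y - t) + y * (Real.exp (-lam) - 1))
      ≤ Real.exp (-(t ^ 2 / (4 * y))) := by
    rw [← hkey]
    apply Real.exp_le_exp.mpr
    have : y * (Real.exp (-lam) - 1) ≤ y * (-lam + lam ^ 2) :=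
      mul_le_mul_of_nonneg_left (by linarith) (le_of_lt hy)
    nlinarith
  calc ((Finset.univ.filter fun z : Fin n' → Fin B =>
        t < |(load z b i : ℝ) - y|).card : ℝ)
      ≤ ((Finset.univ.filter fun z : Fin n' → Fin B => y + t ≤ (load z b i : ℝ)).card : ℝ)
        + ((Finset.univ.filter fun z : Fin n' → Fin B => (load z b i : ℝ) ≤ y - t).card : ℝ) := by
        exact_mod_cast le_trans (Nat.cast_le.mpr hcard) (Nat.cast_le.mpr hcard2) |>.trans (by push_cast; rfl) 
    _ ≤ Real.exp (-(t ^ 2 / (4 * y))) * (B:ℝ) ^ n' + Real.exp (-(t ^ 2 / (4 * y))) * (B:ℝ) ^ n' := by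
        have u1 := hup.trans (mul_le_mul_of_nonneg_right hup2 hBn)
        have u2 := hlo.trans (mul_le_mul_of_nonneg_right hlo2 hBn)
        exact add_le_add u1 u2
    _ = 2 * Real.exp (-(t ^ 2 / (4 * y))) * (B:ℝ) ^ n' := by ring

lemma pair_bound {n' B : ℕ} (hB : 1 ≤ B) {i : ℕ} (hi : i ≤ n') (b : Fin B)
    (w : ℝ) (hw : (332800:ℝ) ^ 3 ≤ w) (hfeas : (B:ℝ) * w ^ 4 ≤ (i:ℝ)) :
    ((Finset.univ.filter fun z : Fin n' → Fin B =>
        (1/20) * dFn ((i:ℝ)/B) < |(load z b i : ℝ) - (i:ℝ)/B|).card : ℝ)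
      ≤ 2 * Real.exp (-(13 * w)) * (B:ℝ) ^ n' := by
  classical
  have hB0 : (0:ℝ) < B := by exact_mod_cast hB
  have hw0 : (0:ℝ) < w := by nlinarith
  set y := (i:ℝ)/B with hydef
  have hyw : w ^ 4 ≤ y := by
    rw [hydef, le_div_iff₀ hB0]
    linarith [hfeas]
  have hy0 : (0:ℝ) < y := lt_of_lt_of_le (pow_pos hw0 4) hyw
  set u := y ^ ((1:ℝ)/3) with hudef
  have hu0 : (0:ℝ) < u := Real.rpow_pos_of_pos hy0 _
  have hu3 : u ^ (3:ℕ) = y := by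
    rw [hudef, ← Real.rpow_natCast (y ^ ((1:ℝ)/3)) 3, ← Real.rpow_mul hy0.le]
    norm_num
  have hu2 : u ^ (2:ℕ) = y ^ ((2:ℝ)/3) := by
    rw [hudef, ← Real.rpow_natCast (y ^ ((1:ℝ)/3)) 2, ← Real.rpow_mul hy0.le]
    norm_num
  have huaw : (332800:ℝ) * w ≤ u := by
    have h3 : ((332800:ℝ) * w) ^ (3:ℕ) ≤ u ^ (3:ℕ) := by
      rw [hu3]
      calc ((332800:ℝ) * w) ^ (3:ℕ) = 332800 ^ 3 * w ^ 3 := by ring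
        _ ≤ w * w ^ 3 := by
            apply mul_le_mul_of_nonneg_right hw (by positivity)
        _ = w ^ 4 := by ring
        _ ≤ y := hyw
    exact le_of_pow_le_pow_left₀ (by norm_num) hu0.le h3
  have hu2' : (2:ℝ) ≤ u := by nlinarith
  -- dFn bounds
  have hdlow : u ^ 2 / 2 - 1 ≤ dFn y := by
    rw [dFn, ← hu2]
    have := Int.ceil_lt_add_one (y - 1/2 * u ^ 2)
    push_cast at this ⊢
    linarith
  have hdhigh : dFn y ≤ u ^ 2 / 2 := by
    rw [dFn, ← hu2]
    have := Int.le_ceil (y - 1/2 * u ^ 2)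
    push_cast at this ⊢
    linarith
  set t := (1/20) * dFn y with htdef
  have htlow : u ^ 2 / 80 ≤ t := by
    rw [htdef]
    nlinarith
  have hthigh : t ≤ u ^ 2 / 40 := by
    rw [htdef]; linarith
  have ht : 0 < t := by nlinarith
  have ht2 : t ≤ 2 * y := by
    calc t ≤ u ^ 2 / 40 := hthigh
      _ ≤ 2 * u ^ (3:ℕ) := by nlinarith
      _ = 2 * y := by rw [hu3]
  have hexp : -(t ^ 2 / (4 * y)) ≤ -(13 * w) := by
    rw [neg_le_neg_iff, le_div_iff₀ (by positivity : (0:ℝ) < 4 * y), ← hu3]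
    have h2 : (u ^ 2 / 80) ^ 2 ≤ t ^ 2 := by
      apply pow_le_pow_left₀ (by positivity) htlow
    have h3 : (332800:ℝ) * w * u ^ (3:ℕ) ≤ u * u ^ (3:ℕ) :=
      mul_le_mul_of_nonneg_right huaw (by positivity)
    have e1 : (u ^ 2 / 80) ^ 2 = u ^ 4 / 6400 := by ring
    have e2 : u * u ^ (3:ℕ) = u ^ 4 := by ring
    have e3 : 13 * w * (4 * u ^ (3:ℕ)) = 332800 * w * u ^ (3:ℕ) / 6400 := by ring
    linarith
  calc ((Finset.univ.filter fun z : Fin n' → Fin B =>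
        (1/20) * dFn ((i:ℝ)/B) < |(load z b i : ℝ) - (i:ℝ)/B|).card : ℝ)
      ≤ 2 * Real.exp (-(t ^ 2 / (4 * ((i:ℝ)/B)))) * (B:ℝ) ^ n' :=
        card_dev hB hi b t ht hy0 ht2
    _ ≤ 2 * Real.exp (-(13 * w)) * (B:ℝ) ^ n' := by
        have hBn : (0:ℝ) ≤ (B:ℝ) ^ n' := by positivity
        exact mul_le_mul_of_nonneg_right
          (mul_le_mul_of_nonneg_left (Real.exp_le_exp.mpr hexp) (by norm_num)) hBn

/-- Chernoff-type concentration for balls into bins: with probability `1 - O(1/n^11)`,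
every prefix load (beyond time `B·(log n)^4`) is within `(1/20)·d(i/B)` of its mean. -/
theorem balls_in_bins_prefix_concentration :
    ∃ C : ℝ, 0 < C ∧ ∀ n B n' : ℕ, 2 ≤ n → 1 ≤ B → 1 ≤ n' → n' ≤ n →
      ENNReal.ofReal (1 - C / (n : ℝ) ^ 11) ≤
        uniformBins n' B
          {z | ∀ i : ℕ, ∀ b : Fin B, (B : ℝ) * (Real.log n) ^ 4 ≤ (i : ℝ) → i ≤ n' →
            |(load z b i : ℝ) - (i : ℝ)/B| ≤ (1/20) * dFn ((i : ℝ)/B)} := by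
  classical
  refine ⟨4 * Real.exp (11 * 332800 ^ 3), by positivity, ?_⟩
  intro n B n' hn hB hn'1 hn'n
  set C : ℝ := 4 * Real.exp (11 * 332800 ^ 3) with hCdef
  have hn0 : (0:ℝ) < n := by
    have : (2:ℝ) ≤ n := by exact_mod_cast hn
    linarith
  have hn11 : (0:ℝ) < (n:ℝ) ^ 11 := by positivity
  by_cases hsmall : (n:ℝ) ^ 11 ≤ Real.exp (11 * 332800 ^ 3)
  · have h0 : 1 - C / (n:ℝ) ^ 11 ≤ 0 := by
      rw [sub_nonpos, le_div_iff₀ hn11, hCdef]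
      nlinarith [Real.exp_pos ((11:ℝ) * 332800 ^ 3)]
    rw [ENNReal.ofReal_eq_zero.mpr h0]
    exact zero_le
  push_neg at hsmall
  have hw : (332800:ℝ) ^ 3 ≤ Real.log n := by
    have h2 := Real.log_lt_log (Real.exp_pos _) hsmall
    rw [Real.log_exp, Real.log_pow] at h2
    push_cast at h2
    linarith
  set w := Real.log n with hwdef
  have hw0 : (0:ℝ) < w := by nlinarith
  have hwge1 : (1:ℝ) ≤ w := by nlinarith
  have hw1 : (1:ℝ) ≤ w ^ 4 := by nlinarith [pow_le_pow_left₀ (by norm_num : (0:ℝ) ≤ 1) hwge1 4]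
  set p : (Fin n' → Fin B) → Prop := fun z =>
    ∀ i : ℕ, ∀ b : Fin B, (B : ℝ) * w ^ 4 ≤ (i : ℝ) → i ≤ n' →
      |(load z b i : ℝ) - (i : ℝ)/B| ≤ (1/20) * dFn ((i : ℝ)/B) with hpdef
  have hset : {z : Fin n' → Fin B | ∀ i : ℕ, ∀ b : Fin B,
      (B : ℝ) * w ^ 4 ≤ (i : ℝ) → i ≤ n' →
      |(load z b i : ℝ) - (i : ℝ)/B| ≤ (1/20) * dFn ((i : ℝ)/B)}
      = ↑(Finset.univ.filter p) := by
    ext z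
    simp [hpdef]
  rw [hset, uniformBins_coe_finset]
  -- counting
  set good := Finset.univ.filter p with hgood
  set bad := Finset.univ.filter (fun z => ¬ p z) with hbad
  have hBR : (0:ℝ) < B := by exact_mod_cast hB
  have hBpow : (0:ℝ) < (B:ℝ) ^ n' := by positivity
  have hsplit : good.card + bad.card = B ^ n' := by
    rw [hgood, hbad, Finset.card_filter_add_card_filter_not,
      Finset.card_univ, Fintype.card_fun, Fintype.card_fin, Fintype.card_fin]
  -- bound on bad
  have hbadbound : (bad.card : ℝ) ≤ 4 / (n:ℝ) ^ 11 * (B:ℝ) ^ n' := by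
    by_cases hfeas : (B:ℝ) * w ^ 4 ≤ (n':ℝ)
    · -- union bound
      have hBn : (B:ℝ) ≤ (n:ℝ) := by
        have h1 : (B:ℝ) ≤ (B:ℝ) * w ^ 4 := by nlinarith
        have h2 : (n':ℝ) ≤ (n:ℝ) := by exact_mod_cast hn'n
        linarith
      set T : ℕ × Fin B → Finset (Fin n' → Fin B) := fun q =>
        Finset.univ.filter (fun z => (B:ℝ) * w ^ 4 ≤ (q.1:ℝ) ∧
          (1/20) * dFn ((q.1:ℝ)/B) < |(load z q.2 q.1 : ℝ) - (q.1:ℝ)/B|) with hTdef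
      have hsub : bad ⊆ ((Finset.range (n'+1)) ×ˢ Finset.univ).biUnion T := by
        intro z hz
        have hz' : ¬ p z := (Finset.mem_filter.mp hz).2
        simp only [hpdef] at hz'
        push_neg at hz'
        obtain ⟨i, b, h1, h2, h3⟩ := hz'
        apply Finset.mem_biUnion.mpr
        refine ⟨(i, b), ?_, ?_⟩
        · rw [Finset.mem_product, Finset.mem_range]
          exact ⟨Nat.lt_succ_of_le h2, Finset.mem_univ b⟩
        · rw [hTdef]
          simp only [Finset.mem_filter, Finset.mem_univ, true_and]
          exact ⟨h1, h3⟩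
      have hcard1 : bad.card ≤ ∑ q ∈ (Finset.range (n'+1)) ×ˢ Finset.univ, (T q).card :=
        le_trans (Finset.card_le_card hsub) (Finset.card_biUnion_le)
      have hperq : ∀ q ∈ (Finset.range (n'+1)) ×ˢ (Finset.univ : Finset (Fin B)),
          ((T q).card : ℝ) ≤ 2 * Real.exp (-(13 * w)) * (B:ℝ) ^ n' := by
        rintro ⟨i, b⟩ hq
        rw [Finset.mem_product, Finset.mem_range] at hq
        have hile : i ≤ n' := Nat.lt_succ_iff.mp hq.1
        by_cases hfq : (B:ℝ) * w ^ 4 ≤ (i:ℝ)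
        · have hTsub : T (i, b) ⊆ Finset.univ.filter (fun z : Fin n' → Fin B =>
              (1/20) * dFn ((i:ℝ)/B) < |(load z b i : ℝ) - (i:ℝ)/B|) := by
            intro z hz'
            simp only [hTdef, Finset.mem_filter] at hz' ⊢
            exact ⟨hz'.1, hz'.2.2⟩
          calc ((T (i, b)).card : ℝ)
              ≤ ((Finset.univ.filter (fun z : Fin n' → Fin B =>
                  (1/20) * dFn ((i:ℝ)/B) < |(load z b i : ℝ) - (i:ℝ)/B|)).card : ℝ) := by
                exact_mod_cast Finset.card_le_card hTsub
            _ ≤ 2 * Real.exp (-(13 * w)) * (B:ℝ) ^ n' := pair_bound hB hile b w hw hfq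
        · have : T (i, b) = ∅ := by
            simp only [hTdef]
            rw [Finset.filter_eq_empty_iff]
            intro z _
            rw [not_and]
            intro h
            exact absurd h hfq
          rw [this]
          simp only [Finset.card_empty, Nat.cast_zero]
          positivity
      have hsum : ((∑ q ∈ (Finset.range (n'+1)) ×ˢ Finset.univ, (T q).card : ℕ) : ℝ)
          ≤ ((n'+1) * B : ℝ) * (2 * Real.exp (-(13 * w)) * (B:ℝ) ^ n') := by
        push_cast
        calc (∑ q ∈ (Finset.range (n'+1)) ×ˢ Finset.univ, ((T q).card : ℝ))
            ≤ ∑ _q ∈ (Finset.range (n'+1)) ×ˢ (Finset.univ : Finset (Fin B)),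
                (2 * Real.exp (-(13 * w)) * (B:ℝ) ^ n') := Finset.sum_le_sum hperq
          _ = (((Finset.range (n'+1)) ×ˢ (Finset.univ : Finset (Fin B))).card : ℝ)
                * (2 * Real.exp (-(13 * w)) * (B:ℝ) ^ n') := by
              rw [Finset.sum_const, nsmul_eq_mul]
          _ = ((n'+1) * B : ℝ) * (2 * Real.exp (-(13 * w)) * (B:ℝ) ^ n') := by
              rw [Finset.card_product, Finset.card_range, Finset.card_univ, Fintype.card_fin]
              push_cast; ring
      have hexpw : Real.exp (-(13 * w)) = 1 / (n:ℝ) ^ 13 := by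
        rw [Real.exp_neg, one_div, hwdef]
        congr 1
        rw [show (13:ℝ) * Real.log n = ((13:ℕ):ℝ) * Real.log n by norm_num,
          Real.exp_nat_mul, Real.exp_log hn0]
      have hn'n1 : ((n':ℝ) + 1) ≤ 2 * n := by
        have h2 : (n':ℝ) ≤ (n:ℝ) := by exact_mod_cast hn'n
        have h2n : (2:ℝ) ≤ (n:ℝ) := by exact_mod_cast hn
        linarith
      calc (bad.card : ℝ) ≤ ((∑ q ∈ (Finset.range (n'+1)) ×ˢ Finset.univ, (T q).card : ℕ) : ℝ) := by
            exact_mod_cast hcard1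
        _ ≤ ((n'+1) * B : ℝ) * (2 * Real.exp (-(13 * w)) * (B:ℝ) ^ n') := hsum
        _ ≤ (2 * n * n) * (2 * (1 / (n:ℝ) ^ 13) * (B:ℝ) ^ n') := by
            rw [hexpw]
            apply mul_le_mul_of_nonneg_right _ (by positivity)
            push_cast
            nlinarith [hBR, hBn, hn'n1]
        _ = 4 / (n:ℝ) ^ 11 * (B:ℝ) ^ n' * ((n:ℝ) ^ 2 / (n:ℝ) ^ 2) := by
            field_simp
            ring
        _ = 4 / (n:ℝ) ^ 11 * (B:ℝ) ^ n' := by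
            rw [div_self (by positivity : ((n:ℝ) ^ 2) ≠ 0), mul_one]
    · -- vacuous
      have : bad = ∅ := by
        rw [hbad]
        apply Finset.filter_false_of_mem
        intro z _
        rw [not_not, hpdef]
        intro i b h1 h2
        exfalso
        apply hfeas
        calc (B:ℝ) * w ^ 4 ≤ (i:ℝ) := h1
          _ ≤ (n':ℝ) := by exact_mod_cast h2
      rw [this]
      simp only [Finset.card_empty, Nat.cast_zero]
      positivity
  -- conclude
  have hkey : 1 - C / (n:ℝ) ^ 11 ≤ (good.card : ℝ) / (B:ℝ) ^ n' := by
    have hgb : (good.card : ℝ) = (B:ℝ) ^ n' - bad.card := by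
      have := hsplit
      have h2 : ((good.card + bad.card : ℕ) : ℝ) = ((B ^ n' : ℕ) : ℝ) := by
        exact_mod_cast congrArg (Nat.cast : ℕ → ℝ) this
      push_cast at h2
      linarith
    rw [hgb, sub_div, div_self hBpow.ne']
    have h4C : (4:ℝ) ≤ C := by
      rw [hCdef]
      nlinarith [Real.add_one_le_exp ((11:ℝ) * 332800 ^ 3)]
    have hbd : (bad.card : ℝ) / (B:ℝ) ^ n' ≤ C / (n:ℝ) ^ 11 := by
      rw [div_le_iff₀ hBpow]
      calc (bad.card : ℝ) ≤ 4 / (n:ℝ) ^ 11 * (B:ℝ) ^ n' := hbadbound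
        _ ≤ C / (n:ℝ) ^ 11 * (B:ℝ) ^ n' := by
            apply mul_le_mul_of_nonneg_right _ hBpow.le
            gcongr
    linarith
  calc ENNReal.ofReal (1 - C / (n:ℝ) ^ 11)
      ≤ ENNReal.ofReal ((good.card : ℝ) / (B:ℝ) ^ n') := ENNReal.ofReal_le_ofReal hkey
    _ = (good.card : ℝ≥0∞) / (B:ℝ≥0∞) ^ n' := by
        rw [ENNReal.ofReal_div_of_pos hBpow, ENNReal.ofReal_natCast]
        congr 1
        rw [← ENNReal.ofReal_natCast B, ← ENNReal.ofReal_pow (by positivity)]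
end

section
/- There exists a constant c > 0 such that for every integer n ≥ 2, every deterministic online sorting strategy s for array size n, every integer 1 ≤ i ≤ n, and every index j ∈ {1,...,n−1}, the following holds: if the event {T_j(s,x) > n−i or T_{j+1}(s,x) > n−i} has positive probability (over an input x of n i.i.d. uniform samples from [0,1]), then Pr[ |A(j+1) − A(j)| ≥ 1/(4i) | T_j(s,x) > n−i or T_{j+1}(s,x) > n−i ] ≥ c, where A = A(s,x) is the final array and T_j(s,x) is the time at which cell j is filled. -/
open MeasureTheory
open scoped ENNReal

/-- The distribution of `n` i.i.d. uniform samples from `[0,1]`. -/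
noncomputable def uniformCube (n : ℕ) : Measure (Fin n → ℝ) :=
  Measure.pi fun _ => (volume : Measure ℝ).restrict (Set.Icc 0 1)

/-- A deterministic online sorting strategy for array size `n`: upon arrival of the
`(k+1)`-st item, it is placed into cell `place x k`, which depends only on the first
`k+1` items and is distinct from all previously used cells. -/
structure OnlineStrategy (n : ℕ) where
  place : (Fin n → ℝ) → Fin n → Fin n
  online : ∀ x y : Fin n → ℝ, ∀ k : Fin n,
    (∀ i : Fin n, i ≤ k → x i = y i) → place x k = place y k
  inj : ∀ x : Fin n → ℝ, Function.Injective (place x)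
  meas : ∀ k : Fin n, Measurable fun x => place x k

/-- The final array produced by the strategy (cells indexed `0,…,n-1`):
cell `j` holds the item inserted at the unique time `k` with `place x k = j`. -/
noncomputable def strategyArr {n : ℕ} (S : OnlineStrategy n) (x : Fin n → ℝ) (j : ℕ) : ℝ :=
  if h : j < n then
    haveI : Nonempty (Fin n) := ⟨⟨j, h⟩⟩
    x (Function.invFun (S.place x) ⟨j, h⟩)
  else 0

/-- The cost: the sum of absolute differences between adjacent cells. -/
noncomputable def strategyCost {n : ℕ} (S : OnlineStrategy n) (x : Fin n → ℝ) : ℝ :=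
  ∑ j ∈ Finset.range (n - 1), |strategyArr S x (j + 1) - strategyArr S x j|

/-- The time (0-indexed, in `{0,…,n-1}`) at which cell `j` is filled, i.e. the unique
`k` with `place x k = j`. (Cell `j` out of range gets the junk value `0`.) -/
noncomputable def fillTime {n : ℕ} (S : OnlineStrategy n) (x : Fin n → ℝ) (j : ℕ) : ℕ :=
  if h : j < n then
    haveI : Nonempty (Fin n) := ⟨⟨j, h⟩⟩
    Fin.val (Function.invFun (S.place x) ⟨j, h⟩)
  else 0

/-- The uniform distribution on `Fin m`. -/
noncomputable def uniformFin (m : ℕ) : MeasureTheory.Measure (Fin m) :=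
  (m : ℝ≥0∞)⁻¹ • MeasureTheory.Measure.count

section Aux

variable {n : ℕ} (S : OnlineStrategy n)

lemma fillTime_lt (x : Fin n → ℝ) {j : ℕ} (h : j < n) : fillTime S x j < n := by
  haveI : Nonempty (Fin n) := ⟨⟨j, h⟩⟩
  simp only [fillTime, dif_pos h]
  exact (Function.invFun (S.place x) ⟨j, h⟩).isLt

lemma fillTime_spec (x : Fin n → ℝ) {j : ℕ} (h : j < n) :
    S.place x ⟨fillTime S x j, fillTime_lt S x h⟩ = ⟨j, h⟩ := by
  haveI : Nonempty (Fin n) := ⟨⟨j, h⟩⟩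
  have hs : Function.Surjective (S.place x) :=
    Finite.injective_iff_surjective.mp (S.inj x)
  simp only [fillTime, dif_pos h, Fin.eta]
  exact Function.invFun_eq (hs ⟨j, h⟩)

lemma fillTime_eq_iff (x : Fin n → ℝ) {j : ℕ} (h : j < n) (s : Fin n) :
    fillTime S x j = s.val ↔ S.place x s = ⟨j, h⟩ := by
  constructor
  · intro hv
    have hse : (⟨fillTime S x j, fillTime_lt S x h⟩ : Fin n) = s := Fin.ext hv
    rw [← hse]
    exact fillTime_spec S x h
  · intro hs
    have := S.inj x (hs.trans (fillTime_spec S x h).symm)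
    exact (congrArg Fin.val this).symm

lemma measurable_fillTime {j : ℕ} (h : j < n) : Measurable fun x => fillTime S x j := by
  apply measurable_to_countable'
  intro v
  by_cases hv : v < n
  · have hset : (fun x => fillTime S x j) ⁻¹' {v}
        = (fun x => S.place x ⟨v, hv⟩) ⁻¹' {(⟨j, h⟩ : Fin n)} := by
      ext x
      simp only [Set.mem_preimage, Set.mem_singleton_iff]
      exact fillTime_eq_iff S x h ⟨v, hv⟩
    rw [hset]
    exact S.meas _ (measurableSet_singleton _)
  · have hset : (fun x => fillTime S x j) ⁻¹' {v} = ∅ := by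
      ext x
      simp only [Set.mem_preimage, Set.mem_singleton_iff, Set.mem_empty_iff_false, iff_false]
      intro hx
      exact hv (hx ▸ fillTime_lt S x h)
    rw [hset]
    exact MeasurableSet.empty

lemma arr_eq (x : Fin n → ℝ) {j : ℕ} (h : j < n) :
    strategyArr S x j = x ⟨fillTime S x j, fillTime_lt S x h⟩ := by
  simp only [strategyArr, fillTime, dif_pos h, Fin.eta]

lemma measurable_arr {j : ℕ} (h : j < n) : Measurable fun x => strategyArr S x j := by
  have heq : (fun x => strategyArr S x j)
      = fun x => ∑ v : Fin n, if fillTime S x j = v.val then x v else 0 := by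
    funext x
    have h1 : ∀ v : Fin n, v ∈ Finset.univ → v ≠ ⟨fillTime S x j, fillTime_lt S x h⟩ →
        (if fillTime S x j = v.val then x v else 0) = 0 := by
      intro v _ hv
      rw [if_neg]
      intro hc
      exact hv (Fin.ext hc.symm)
    rw [arr_eq S x h,
      Finset.sum_eq_single _ h1 (fun hm => absurd (Finset.mem_univ _) hm), if_pos rfl]
  rw [heq]
  apply Finset.measurable_sum
  intro v _
  exact Measurable.ite ((measurable_fillTime S h) (measurableSet_singleton v.val))
    (measurable_pi_apply v) measurable_const

end Aux

/-- Conditioned on one of the adjacent cells `j, j+1` being filled only after time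
`n-i`, the final contents of cells `j` and `j+1` differ by at least `1/(4i)` with
probability `Ω(1)`. -/
theorem adjacent_pair_gap_conditional_prob :
    ∃ c : ℝ, 0 < c ∧ ∀ n : ℕ, 2 ≤ n → ∀ S : OnlineStrategy n, ∀ i : ℕ, 1 ≤ i → i ≤ n →
      ∀ j : ℕ, j < n - 1 →
      uniformCube n {x | n - i ≤ fillTime S x j ∨ n - i ≤ fillTime S x (j + 1)} ≠ 0 →
      ENNReal.ofReal c ≤
        ProbabilityTheory.cond (uniformCube n)
          {x | n - i ≤ fillTime S x j ∨ n - i ≤ fillTime S x (j + 1)}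
          {x | 1 / (4 * (i : ℝ)) ≤ |strategyArr S x (j + 1) - strategyArr S x j|} := by
  refine ⟨1/2, by norm_num, ?_⟩
  intro n hn S i hi1 hin j hj hne
  obtain ⟨m, rfl⟩ : ∃ m, n = m + 1 := ⟨n - 1, by omega⟩
  have jlt : j < m + 1 := by omega
  have j1lt : j + 1 < m + 1 := by omega
  set ν : Measure ℝ := (volume : Measure ℝ).restrict (Set.Icc 0 1) with hνdef
  haveI hνp : IsProbabilityMeasure ν := by
    constructor
    rw [hνdef, Measure.restrict_apply_univ, Real.volume_Icc]
    norm_num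
  have hcube : uniformCube (m+1) = Measure.pi (fun _ : Fin (m+1) => ν) := rfl
  haveI : IsProbabilityMeasure (uniformCube (m+1)) := by
    rw [hcube]; infer_instance
  set δ : ℝ := 1 / (4 * (i : ℝ)) with hδdef
  have hδpos : 0 < δ := by
    rw [hδdef]
    have : (0:ℝ) < (i:ℝ) := by exact_mod_cast hi1
    positivity
  set E : Set (Fin (m+1) → ℝ) :=
    {x | m + 1 - i ≤ fillTime S x j ∨ m + 1 - i ≤ fillTime S x (j + 1)} with hEdef
  have hmfj : Measurable fun x : Fin (m+1) → ℝ => fillTime S x j := measurable_fillTime S jlt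
  have hmfj1 : Measurable fun x : Fin (m+1) → ℝ => fillTime S x (j+1) := measurable_fillTime S j1lt
  have hmE : MeasurableSet E :=
    MeasurableSet.union (hmfj MeasurableSet.of_discrete) (hmfj1 MeasurableSet.of_discrete)
  have hmgap : Measurable fun x : Fin (m+1) → ℝ =>
      |strategyArr S x (j + 1) - strategyArr S x j| :=
    ((measurable_arr S j1lt).sub (measurable_arr S jlt)).abs
  set G : Set (Fin (m+1) → ℝ) :=
    {x | δ ≤ |strategyArr S x (j + 1) - strategyArr S x j|} with hGdef
  have hmG : MeasurableSet G := measurableSet_le measurable_const hmgap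
  have hmmax : Measurable fun x : Fin (m+1) → ℝ =>
      max (fillTime S x j) (fillTime S x (j+1)) := by
    apply measurable_to_countable'
    intro v
    have hset : (fun x : Fin (m+1) → ℝ => max (fillTime S x j) (fillTime S x (j+1))) ⁻¹' {v}
        = ((fun x : Fin (m+1) → ℝ => fillTime S x j) ⁻¹' {v}
            ∩ (fun x : Fin (m+1) → ℝ => fillTime S x (j+1)) ⁻¹' Set.Iic v)
          ∪ ((fun x : Fin (m+1) → ℝ => fillTime S x (j+1)) ⁻¹' {v}
            ∩ (fun x : Fin (m+1) → ℝ => fillTime S x j) ⁻¹' Set.Iic v) := by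
      ext x
      simp only [Set.mem_preimage, Set.mem_singleton_iff, Set.mem_Iic, Set.mem_union,
        Set.mem_inter_iff]
      omega
    rw [hset]
    exact ((hmfj MeasurableSet.of_discrete).inter (hmfj1 MeasurableSet.of_discrete)).union
      ((hmfj1 MeasurableSet.of_discrete).inter (hmfj MeasurableSet.of_discrete))
  have ft_ne : ∀ x : Fin (m+1) → ℝ, fillTime S x j ≠ fillTime S x (j+1) := by
    intro x hcon
    have h1 := fillTime_spec S x jlt
    have h2 := fillTime_spec S x j1lt
    have h4 : (⟨fillTime S x j, fillTime_lt S x jlt⟩ : Fin (m+1))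
        = ⟨fillTime S x (j+1), fillTime_lt S x j1lt⟩ := Fin.ext hcon
    have h5 : (⟨j, jlt⟩ : Fin (m+1)) = ⟨j+1, j1lt⟩ := by rw [← h1, ← h2, h4]
    simp only [Fin.mk.injEq] at h5
    omega
  -- the per-index sets
  set Ak : Fin (m+1) → Set (Fin (m+1) → ℝ) := fun k =>
    {x | max (fillTime S x j) (fillTime S x (j+1)) = k.val
      ∧ |strategyArr S x (j + 1) - strategyArr S x j| < δ} with hAkdef
  have hmAk : ∀ k : Fin (m+1), MeasurableSet (Ak k) := by
    intro k
    exact MeasurableSet.inter (hmmax (measurableSet_singleton k.val))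
      (measurableSet_lt hmgap measurable_const)
  -- the key estimate
  have key : ∀ k : Fin (m+1), m + 1 - i ≤ k.val →
      uniformCube (m+1) (Ak k) ≤ ENNReal.ofReal (2*δ) * uniformCube (m+1) E := by
    intro k hk
    set e := MeasurableEquiv.piFinSuccAbove (fun _ : Fin (m+1) => ℝ) k with hedef
    have hprod := measurePreserving_piFinSuccAbove (fun _ : Fin (m+1) => ν) k
    set μ' : Measure (Fin m → ℝ) := Measure.pi (fun _ : Fin m => ν) with hμ'def
    set X : ℝ → (Fin m → ℝ) → (Fin (m+1) → ℝ) := fun t y => e.symm (t, y) with hXdef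
    have hXins : ∀ t y, X t y = k.insertNth t y := by
      intro t y
      simp [hXdef, hedef, MeasurableEquiv.piFinSuccAbove_symm_apply, Fin.insertNthEquiv]
    have hXk : ∀ t y, X t y k = t := by
      intro t y
      rw [hXins]
      simp
    have coord_ne : ∀ (t t' : ℝ) (y : Fin m → ℝ) (s : Fin (m+1)), s ≠ k →
        X t y s = X t' y s := by
      intro t t' y s hs
      obtain ⟨u, rfl⟩ := Fin.exists_succAbove_eq hs
      rw [hXins, hXins, Fin.insertNth_apply_succAbove, Fin.insertNth_apply_succAbove]
    have place_agree : ∀ (t t' : ℝ) (y : Fin m → ℝ) (s : Fin (m+1)), s < k →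
        S.place (X t y) s = S.place (X t' y) s := by
      intro t t' y s hs
      apply S.online
      intro r hr
      exact coord_ne t t' y r (ne_of_lt (lt_of_le_of_lt hr hs))
    have ft_agree : ∀ (t t' : ℝ) (y : Fin m → ℝ) (c : ℕ) (hc : c < m+1),
        fillTime S (X t y) c < k.val → fillTime S (X t' y) c = fillTime S (X t y) c := by
      intro t t' y c hc hlt
      have h1 := fillTime_spec S (X t y) hc
      have hsk : (⟨fillTime S (X t y) c, fillTime_lt S (X t y) hc⟩ : Fin (m+1)) < k := hlt
      have h2 : S.place (X t' y) ⟨fillTime S (X t y) c, fillTime_lt S (X t y) hc⟩ = ⟨c, hc⟩ :=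
        (place_agree t' t y _ hsk).trans h1
      exact (fillTime_eq_iff S (X t' y) hc _).mpr h2
    have K_agree : ∀ (t t' : ℝ) (y : Fin m → ℝ),
        k.val ≤ max (fillTime S (X t y) j) (fillTime S (X t y) (j+1)) →
        k.val ≤ max (fillTime S (X t' y) j) (fillTime S (X t' y) (j+1)) := by
      intro t t' y hK
      by_contra hK'
      push_neg at hK'
      have hj' : fillTime S (X t' y) j < k.val :=
        lt_of_le_of_lt (le_max_left _ _) hK'
      have hj1' : fillTime S (X t' y) (j+1) < k.val :=
        lt_of_le_of_lt (le_max_right _ _) hK'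
      have e1 := ft_agree t' t y j jlt hj'
      have e2 := ft_agree t' t y (j+1) j1lt hj1'
      rw [e1, e2] at hK
      omega
    have gap_formula : ∀ (y : Fin m → ℝ) (tw : ℝ),
        max (fillTime S (X tw y) j) (fillTime S (X tw y) (j+1)) = k.val →
        ∃ a : ℝ, ∀ t : ℝ, max (fillTime S (X t y) j) (fillTime S (X t y) (j+1)) = k.val →
          |strategyArr S (X t y) (j + 1) - strategyArr S (X t y) j| = |t - a| := by
      intro y tw hKw
      rcases max_choice (fillTime S (X tw y) j) (fillTime S (X tw y) (j+1)) with hmx | hmx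
      · -- cell j filled last, at time k
        have hfj : fillTime S (X tw y) j = k.val := hmx.symm.trans hKw
        have hfj1lt : fillTime S (X tw y) (j+1) < k.val := by
          have hle : fillTime S (X tw y) (j+1) ≤ k.val := hKw ▸ le_max_right _ _
          have hne' : fillTime S (X tw y) (j+1) ≠ k.val := fun hcon =>
            ft_ne (X tw y) (hfj.trans hcon.symm)
          omega
        have ht0lt : fillTime S (X tw y) (j+1) < m + 1 := fillTime_lt S (X tw y) j1lt
        set t0f : Fin (m+1) := ⟨fillTime S (X tw y) (j+1), ht0lt⟩ with ht0fdef
        have hne_t0k : t0f ≠ k := Fin.ne_of_val_ne (Nat.ne_of_lt hfj1lt)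
        refine ⟨X tw y t0f, ?_⟩
        intro t hKt
        have hfj1t : fillTime S (X t y) (j+1) = fillTime S (X tw y) (j+1) :=
          ft_agree tw t y (j+1) j1lt hfj1lt
        have hfjt : fillTime S (X t y) j = k.val := by
          rcases max_choice (fillTime S (X t y) j) (fillTime S (X t y) (j+1)) with h | h
          · exact h.symm.trans hKt
          · rw [hfj1t] at h
            omega
        have e1 : strategyArr S (X t y) j = t := by
          rw [arr_eq S (X t y) jlt]
          have hke : (⟨fillTime S (X t y) j, fillTime_lt S (X t y) jlt⟩ : Fin (m+1)) = k :=
            Fin.ext hfjt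
          rw [hke, hXk]
        have e2 : strategyArr S (X t y) (j+1) = X tw y t0f := by
          rw [arr_eq S (X t y) j1lt]
          have hke : (⟨fillTime S (X t y) (j+1), fillTime_lt S (X t y) j1lt⟩ : Fin (m+1))
              = t0f := Fin.ext hfj1t
          rw [hke]
          exact coord_ne t tw y t0f hne_t0k
        rw [e1, e2, abs_sub_comm]
      · -- cell j+1 filled last, at time k
        have hfj1 : fillTime S (X tw y) (j+1) = k.val := hmx.symm.trans hKw
        have hfjlt : fillTime S (X tw y) j < k.val := by
          have hle : fillTime S (X tw y) j ≤ k.val := hKw ▸ le_max_left _ _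
          have hne' : fillTime S (X tw y) j ≠ k.val := fun hcon =>
            ft_ne (X tw y) (hcon.trans hfj1.symm)
          omega
        have ht0lt : fillTime S (X tw y) j < m + 1 := fillTime_lt S (X tw y) jlt
        set t0f : Fin (m+1) := ⟨fillTime S (X tw y) j, ht0lt⟩ with ht0fdef
        have hne_t0k : t0f ≠ k := Fin.ne_of_val_ne (Nat.ne_of_lt hfjlt)
        refine ⟨X tw y t0f, ?_⟩
        intro t hKt
        have hfjt : fillTime S (X t y) j = fillTime S (X tw y) j :=
          ft_agree tw t y j jlt hfjlt
        have hfj1t : fillTime S (X t y) (j+1) = k.val := by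
          rcases max_choice (fillTime S (X t y) j) (fillTime S (X t y) (j+1)) with h | h
          · rw [hfjt] at h
            omega
          · exact h.symm.trans hKt
        have e1 : strategyArr S (X t y) (j+1) = t := by
          rw [arr_eq S (X t y) j1lt]
          have hke : (⟨fillTime S (X t y) (j+1), fillTime_lt S (X t y) j1lt⟩ : Fin (m+1)) = k :=
            Fin.ext hfj1t
          rw [hke, hXk]
        have e2 : strategyArr S (X t y) j = X tw y t0f := by
          rw [arr_eq S (X t y) jlt]
          have hke : (⟨fillTime S (X t y) j, fillTime_lt S (X t y) jlt⟩ : Fin (m+1))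
              = t0f := Fin.ext hfjt
          rw [hke]
          exact coord_ne t tw y t0f hne_t0k
        rw [e1, e2]
    -- Fubini reduction
    have fub : ∀ (B : Set (Fin (m+1) → ℝ)), MeasurableSet B →
        uniformCube (m+1) B = ∫⁻ y, ν {t | X t y ∈ B} ∂μ' := by
      intro B hB
      have hBsym : MeasurableSet (e.symm ⁻¹' B) := e.symm.measurable hB
      have hpre : e ⁻¹' (e.symm ⁻¹' B) = B := by
        ext x; simp
      have h1 : uniformCube (m+1) B = (ν.prod μ') (e.symm ⁻¹' B) := by
        conv_lhs => rw [← hpre]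
        exact hprod.measure_preimage_equiv _
      rw [h1, Measure.prod_apply_symm hBsym]
      rfl
    set Yk : Set (Fin m → ℝ) :=
      {y | k.val ≤ max (fillTime S (X 0 y) j) (fillTime S (X 0 y) (j+1))} with hYkdef
    have hmX0 : Measurable fun y : Fin m → ℝ => X 0 y :=
      e.symm.measurable.comp (measurable_const.prodMk measurable_id)
    have hmKset : MeasurableSet {x : Fin (m+1) → ℝ |
        k.val ≤ max (fillTime S x j) (fillTime S x (j+1))} :=
      hmmax MeasurableSet.of_discrete
    have hmYk : MeasurableSet Yk := hmX0 hmKset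
    have hfiber : ∀ y, ν {t | X t y ∈ Ak k}
        ≤ Yk.indicator (fun _ => ENNReal.ofReal (2*δ)) y := by
      intro y
      rcases Set.eq_empty_or_nonempty {t | X t y ∈ Ak k} with hemp | ⟨tw, htw⟩
      · rw [hemp]
        simp
      · have hKw : max (fillTime S (X tw y) j) (fillTime S (X tw y) (j+1)) = k.val := htw.1
        have hyY : y ∈ Yk := K_agree tw 0 y (le_of_eq hKw.symm)
        rw [Set.indicator_of_mem hyY]
        obtain ⟨a, ha⟩ := gap_formula y tw hKw
        have hsub : {t | X t y ∈ Ak k} ⊆ Set.Ioo (a - δ) (a + δ) := by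
          intro t ht
          have h1 := ha t ht.1
          have h2 : |t - a| < δ := h1 ▸ ht.2
          rw [abs_sub_lt_iff] at h2
          exact ⟨by linarith [h2.2], by linarith [h2.1]⟩
        calc ν {t | X t y ∈ Ak k} ≤ ν (Set.Ioo (a - δ) (a + δ)) := measure_mono hsub
          _ ≤ volume (Set.Ioo (a - δ) (a + δ)) := by
              rw [hνdef, Measure.restrict_apply measurableSet_Ioo]
              exact measure_mono Set.inter_subset_left
          _ = ENNReal.ofReal (2*δ) := by
              rw [Real.volume_Ioo]
              congr 1
              ring
    have hAbound : uniformCube (m+1) (Ak k) ≤ ENNReal.ofReal (2*δ) * μ' Yk := by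
      rw [fub (Ak k) (hmAk k)]
      calc ∫⁻ y, ν {t | X t y ∈ Ak k} ∂μ'
          ≤ ∫⁻ y, Yk.indicator (fun _ => ENNReal.ofReal (2*δ)) y ∂μ' := lintegral_mono hfiber
        _ = ENNReal.ofReal (2*δ) * μ' Yk := lintegral_indicator_const hmYk _
    have hYkeq : uniformCube (m+1) {x : Fin (m+1) → ℝ |
        k.val ≤ max (fillTime S x j) (fillTime S x (j+1))} = μ' Yk := by
      rw [fub _ hmKset]
      have hfib : ∀ y, ν {t | X t y ∈ {x : Fin (m+1) → ℝ |
          k.val ≤ max (fillTime S x j) (fillTime S x (j+1))}}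
          = Yk.indicator (fun _ => (1:ℝ≥0∞)) y := by
        intro y
        by_cases hy : y ∈ Yk
        · have huniv : {t : ℝ | X t y ∈ {x : Fin (m+1) → ℝ |
              k.val ≤ max (fillTime S x j) (fillTime S x (j+1))}} = Set.univ := by
            ext t
            simp only [Set.mem_setOf_eq, Set.mem_univ, iff_true]
            exact K_agree 0 t y hy
          rw [huniv, Set.indicator_of_mem hy]
          exact measure_univ
        · have hempty : {t : ℝ | X t y ∈ {x : Fin (m+1) → ℝ |
              k.val ≤ max (fillTime S x j) (fillTime S x (j+1))}} = ∅ := by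
            ext t
            simp only [Set.mem_setOf_eq, Set.mem_empty_iff_false, iff_false]
            intro hcon
            exact hy (K_agree t 0 y hcon)
          rw [hempty, Set.indicator_of_notMem hy]
          exact measure_empty
      rw [lintegral_congr hfib, lintegral_indicator_const hmYk, one_mul]
    have hKE : {x : Fin (m+1) → ℝ | k.val ≤ max (fillTime S x j) (fillTime S x (j+1))} ⊆ E := by
      intro x hx
      have : m + 1 - i ≤ max (fillTime S x j) (fillTime S x (j+1)) := le_trans hk hx
      exact le_max_iff.mp this
    calc uniformCube (m+1) (Ak k) ≤ ENNReal.ofReal (2*δ) * μ' Yk := hAbound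
      _ = ENNReal.ofReal (2*δ) * uniformCube (m+1) {x : Fin (m+1) → ℝ |
          k.val ≤ max (fillTime S x j) (fillTime S x (j+1))} := by rw [hYkeq]
      _ ≤ ENNReal.ofReal (2*δ) * uniformCube (m+1) E :=
          mul_le_mul_right (measure_mono hKE) _
  -- covering of E ∩ Gᶜ
  set F : Finset (Fin (m+1)) := Finset.univ.filter (fun k : Fin (m+1) => m + 1 - i ≤ k.val)
    with hFdef
  have hcover : E \ G ⊆ ⋃ k ∈ F, Ak k := by
    rintro x ⟨hxE, hxG⟩
    have hmaxlt : max (fillTime S x j) (fillTime S x (j+1)) < m + 1 :=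
      max_lt (fillTime_lt S x jlt) (fillTime_lt S x j1lt)
    have hkF : (⟨max (fillTime S x j) (fillTime S x (j+1)), hmaxlt⟩ : Fin (m+1)) ∈ F := by
      rw [hFdef]
      simp only [Finset.mem_filter, Finset.mem_univ, true_and]
      exact le_max_iff.mpr hxE
    have hkA : x ∈ Ak ⟨max (fillTime S x j) (fillTime S x (j+1)), hmaxlt⟩ :=
      ⟨rfl, not_le.mp hxG⟩
    exact Set.mem_biUnion hkF hkA
  have hcard : F.card ≤ i := by
    have h1 : F.card = (F.image Fin.val).card :=
      (Finset.card_image_of_injective F Fin.val_injective).symm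
    have h2 : F.image Fin.val ⊆ Finset.Ico (m + 1 - i) (m + 1) := by
      intro v hv
      simp only [hFdef, Finset.mem_image, Finset.mem_filter, Finset.mem_univ, true_and] at hv
      obtain ⟨kk, hkk, rfl⟩ := hv
      exact Finset.mem_Ico.mpr ⟨hkk, kk.isLt⟩
    calc F.card = (F.image Fin.val).card := h1
      _ ≤ (Finset.Ico (m + 1 - i) (m + 1)).card := Finset.card_le_card h2
      _ = (m + 1) - (m + 1 - i) := Nat.card_Ico _ _
      _ ≤ i := by omega
  have hEGbound : uniformCube (m+1) (E \ G)
      ≤ ENNReal.ofReal (1/2) * uniformCube (m+1) E := by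
    calc uniformCube (m+1) (E \ G) ≤ uniformCube (m+1) (⋃ k ∈ F, Ak k) :=
          measure_mono hcover
      _ ≤ ∑ k ∈ F, uniformCube (m+1) (Ak k) := measure_biUnion_finset_le F Ak
      _ ≤ ∑ _k ∈ F, ENNReal.ofReal (2*δ) * uniformCube (m+1) E := by
          apply Finset.sum_le_sum
          intro k hkF
          rw [hFdef] at hkF
          exact key k (Finset.mem_filter.mp hkF).2
      _ = F.card • (ENNReal.ofReal (2*δ) * uniformCube (m+1) E) := Finset.sum_const _
      _ = (F.card : ℝ≥0∞) * (ENNReal.ofReal (2*δ) * uniformCube (m+1) E) := nsmul_eq_mul _ _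
      _ ≤ (i : ℝ≥0∞) * (ENNReal.ofReal (2*δ) * uniformCube (m+1) E) :=
          mul_le_mul_left (by exact_mod_cast Nat.cast_le.mpr hcard) _
      _ = ENNReal.ofReal (1/2) * uniformCube (m+1) E := by
          rw [← mul_assoc]
          congr 1
          rw [← ENNReal.ofReal_natCast i, ← ENNReal.ofReal_mul (by positivity)]
          congr 1
          have hipos : (0:ℝ) < (i:ℝ) := by exact_mod_cast hi1
          rw [hδdef]
          field_simp
          ring
  have hEne : uniformCube (m+1) E ≠ 0 := hne
  have hEfin : uniformCube (m+1) E ≠ ∞ := measure_ne_top _ _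
  have hhalf : ENNReal.ofReal (1/2) * uniformCube (m+1) E ≤ uniformCube (m+1) (E ∩ G) := by
    have hsplit : uniformCube (m+1) (E ∩ G) + uniformCube (m+1) (E \ G)
        = uniformCube (m+1) E := measure_inter_add_diff E hmG
    have h2 : ENNReal.ofReal (1/2) * uniformCube (m+1) E
        + ENNReal.ofReal (1/2) * uniformCube (m+1) E = uniformCube (m+1) E := by
      rw [← add_mul, ← ENNReal.ofReal_add (by norm_num) (by norm_num)]
      norm_num
    have hle : ENNReal.ofReal (1/2) * uniformCube (m+1) E
        + ENNReal.ofReal (1/2) * uniformCube (m+1) E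
        ≤ uniformCube (m+1) (E ∩ G) + ENNReal.ofReal (1/2) * uniformCube (m+1) E := by
      calc ENNReal.ofReal (1/2) * uniformCube (m+1) E
          + ENNReal.ofReal (1/2) * uniformCube (m+1) E
          = uniformCube (m+1) E := h2
        _ = uniformCube (m+1) (E ∩ G) + uniformCube (m+1) (E \ G) := hsplit.symm
        _ ≤ uniformCube (m+1) (E ∩ G) + ENNReal.ofReal (1/2) * uniformCube (m+1) E :=
            add_le_add_right hEGbound _
    exact (ENNReal.add_le_add_iff_right
      (ENNReal.mul_ne_top ENNReal.ofReal_ne_top hEfin)).mp hle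
  rw [ProbabilityTheory.cond_apply hmE]
  have hcancel : (uniformCube (m+1) E)⁻¹ * (ENNReal.ofReal (1/2) * uniformCube (m+1) E)
      = ENNReal.ofReal (1/2) := by
    rw [mul_comm (ENNReal.ofReal (1/2)) (uniformCube (m+1) E), ← mul_assoc,
      ENNReal.inv_mul_cancel hEne hEfin, one_mul]
  calc ENNReal.ofReal (1/2)
      = (uniformCube (m+1) E)⁻¹ * (ENNReal.ofReal (1/2) * uniformCube (m+1) E) := hcancel.symm
    _ ≤ (uniformCube (m+1) E)⁻¹ * uniformCube (m+1) (E ∩ G) := mul_le_mul_right hhalf _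
end
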